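/- (Catalan's identity for bicomplex Pell numbers) For every integer n and every integer r, BP(n)² − BP(n+r)·BP(n−r) = 12·(−1)^{n−r}·P(r)²·(j + ij). -/

import Mathlib

open scoped TensorProduct

noncomputable def bi : ℂ ⊗[ℝ] ℂ := Complex.I ⊗ₜ[ℝ] 1
noncomputable def bj : ℂ ⊗[ℝ] ℂ := (1 : ℂ) ⊗ₜ[ℝ] Complex.I
noncomputable def bij : ℂ ⊗[ℝ] ℂ := Complex.I ⊗ₜ[ℝ] Complex.I

/-- The bicomplex Pell number `BP n = P n + P (n+1) i + P (n+2) j + P (n+3) ij`. -/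
noncomputable def BP (P : ℤ → ℤ) (n : ℤ) : ℂ ⊗[ℝ] ℂ :=
  (P n : ℝ) • (1 : ℂ ⊗[ℝ] ℂ) + (P (n + 1) : ℝ) • bi + (P (n + 2) : ℝ) • bj +
    (P (n + 3) : ℝ) • bij

lemma bi_sq : bi * bi = -1 := by
  simp [bi, Algebra.TensorProduct.tmul_mul_tmul, Algebra.TensorProduct.one_def,
    Complex.I_mul_I, ← TensorProduct.neg_tmul]

lemma bj_sq : bj * bj = -1 := by
  simp [bj, Algebra.TensorProduct.tmul_mul_tmul, Algebra.TensorProduct.one_def,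
    Complex.I_mul_I, ← TensorProduct.tmul_neg]

lemma bij_sq : bij * bij = 1 := by
  simp [bij, Algebra.TensorProduct.tmul_mul_tmul, Algebra.TensorProduct.one_def,
    Complex.I_mul_I, TensorProduct.neg_tmul, TensorProduct.tmul_neg]

lemma bi_bj : bi * bj = bij := by
  simp [bi, bj, bij, Algebra.TensorProduct.tmul_mul_tmul]

lemma bi_bij : bi * bij = -bj := by
  simp [bi, bj, bij, Algebra.TensorProduct.tmul_mul_tmul, Complex.I_mul_I,
    ← TensorProduct.neg_tmul]

lemma bj_bij : bj * bij = -bi := by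
  simp [bi, bj, bij, Algebra.TensorProduct.tmul_mul_tmul, Complex.I_mul_I,
    ← TensorProduct.tmul_neg]

lemma mul_expand (a0 a1 a2 a3 b0 b1 b2 b3 : ℝ) :
    (a0 • (1 : ℂ ⊗[ℝ] ℂ) + a1 • bi + a2 • bj + a3 • bij) *
      (b0 • (1 : ℂ ⊗[ℝ] ℂ) + b1 • bi + b2 • bj + b3 • bij) =
    (a0*b0 - a1*b1 - a2*b2 + a3*b3) • (1 : ℂ ⊗[ℝ] ℂ) +
      (a0*b1 + a1*b0 - a2*b3 - a3*b2) • bi +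
      (a0*b2 + a2*b0 - a1*b3 - a3*b1) • bj +
      (a0*b3 + a3*b0 + a1*b2 + a2*b1) • bij := by
  have h1 := bi_sq; have h2 := bj_sq; have h3 := bij_sq
  have h4 := bi_bj; have h5 := bi_bij; have h6 := bj_bij
  have hc : bj * bi = bij := by rw [mul_comm, h4]
  have hc2 : bij * bi = -bj := by rw [mul_comm, h5]
  have hc3 : bij * bj = -bi := by rw [mul_comm, h6]
  simp only [add_mul, mul_add, smul_mul_smul_comm, mul_one, one_mul, smul_mul_assoc,
    mul_smul_comm, h1, h2, h3, h4, h5, h6, hc, hc2, hc3]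
  module

/-- Two-sided integer induction with two base cases. -/
lemma rec_int (Q : ℤ → Prop) (h0 : Q 0) (h1 : Q 1)
    (hup : ∀ k : ℤ, Q k → Q (k + 1) → Q (k + 2))
    (hdown : ∀ k : ℤ, Q (k + 1) → Q (k + 2) → Q k) : ∀ k : ℤ, Q k := by
  have key : ∀ k : ℤ, Q k ∧ Q (k + 1) := by
    intro k
    induction k using Int.induction_on with
    | zero => exact ⟨h0, by simpa using h1⟩
    | succ k ih =>
      refine ⟨ih.2, ?_⟩
      have := hup k ih.1 ih.2
      rwa [show (k : ℤ) + 1 + 1 = k + 2 by ring]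
    | pred k ih =>
      constructor
      · have h1' : Q (-(k : ℤ) - 1 + 1) := by
          rw [show -(k : ℤ) - 1 + 1 = -k by ring]; exact ih.1
        have h2' : Q (-(k : ℤ) - 1 + 2) := by
          rw [show -(k : ℤ) - 1 + 2 = -k + 1 by ring]; exact ih.2
        exact hdown _ h1' h2'
      · rw [show -(k : ℤ) - 1 + 1 = -k by ring]; exact ih.1
  exact fun k => (key k).1

section Pell
variable (P : ℤ → ℤ) (hP : ∀ n : ℤ, P (n + 2) = 2 * P (n + 1) + P n)
  (hP0 : P 0 = 0) (hP1 : P 1 = 1)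

include hP hP0 hP1 in
lemma pell_neg_one : P (-1) = 1 := by
  have := hP (-1)
  norm_num at this
  omega

include hP hP0 hP1 in
/-- Addition formula for Pell numbers. -/
lemma pell_add (m : ℤ) : ∀ k : ℤ, P (m + k) = P k * P (m + 1) + P (k - 1) * P m := by
  have hm1 := pell_neg_one P hP hP0 hP1
  refine rec_int _ ?_ ?_ ?_ ?_
  · simp [hP0, hm1]
  · norm_num [hP1, hP0]
  · intro k ih1 ih2
    rw [show k + 1 - 1 = k by ring] at ih2
    have hPmk := hP (m + k)
    have hk1 : P (k + 1) = 2 * P k + P (k - 1) := by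
      have := hP (k - 1)
      rwa [show k - 1 + 2 = k + 1 by ring, show k - 1 + 1 = k by ring] at this
    rw [show m + (k + 2) = m + k + 2 by ring, show k + 2 - 1 = k + 1 by ring]
    rw [show m + (k + 1) = m + k + 1 by ring] at ih2
    linear_combination hPmk + 2 * ih2 + ih1 - P (m + 1) * hP k - P m * hk1
  · intro k ih2 ih3
    rw [show k + 1 - 1 = k by ring, show m + (k + 1) = m + k + 1 by ring] at ih2
    rw [show k + 2 - 1 = k + 1 by ring, show m + (k + 2) = m + k + 2 by ring] at ih3
    have hPmk := hP (m + k)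
    have hk1 : P (k + 1) = 2 * P k + P (k - 1) := by
      have := hP (k - 1)
      rwa [show k - 1 + 2 = k + 1 by ring, show k - 1 + 1 = k by ring] at this
    linear_combination -hPmk + ih3 - 2 * ih2 + P (m + 1) * hP k + P m * hk1

include hP hP0 hP1 in
/-- Cassini's identity for Pell numbers, real-valued form. -/
lemma pell_cassini : ∀ m : ℤ,
    (P (m + 1) : ℝ) * (P (m - 1) : ℝ) - (P m : ℝ) ^ 2 = (-1 : ℝ) ^ m := by
  have hm1 := pell_neg_one P hP hP0 hP1
  have hne : (-1 : ℝ) ≠ 0 := by norm_num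
  refine rec_int _ ?_ ?_ ?_ ?_
  · norm_num [hP0, hP1, hm1]
  · have h2 : P 2 = 2 := by have := hP 0; norm_num [hP0, hP1] at this; omega
    norm_num [hP0, hP1, h2]
  · intro k ih1 ih2
    rw [show k + 1 - 1 = k by ring, show k + 1 + 1 = k + 2 by ring] at ih2
    rw [show k + 2 + 1 = k + 3 by ring, show k + 2 - 1 = k + 1 by ring,
      show (-1 : ℝ) ^ (k + 2) = (-1 : ℝ) ^ (k + 1) * (-1) by
        rw [← zpow_add_one₀ hne]; ring_nf]
    have hR : (P (k + 3) : ℝ) = 2 * (P (k + 2) : ℝ) + (P (k + 1) : ℝ) := by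
      have := hP (k + 1)
      rw [show k + 1 + 1 = k + 2 by ring, show k + 1 + 2 = k + 3 by ring] at this
      exact_mod_cast this
    have hS : (P (k + 2) : ℝ) = 2 * (P (k + 1) : ℝ) + (P k : ℝ) := by
      exact_mod_cast hP k
    linear_combination (P (k + 1) : ℝ) * hR - ih2 - (P (k + 2) : ℝ) * hS
  · intro k ih2 ih3
    rw [show k + 1 - 1 = k by ring, show k + 1 + 1 = k + 2 by ring] at ih2
    have hS : (P (k + 2) : ℝ) = 2 * (P (k + 1) : ℝ) + (P k : ℝ) := by
      exact_mod_cast hP k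
    have hT : (P (k + 1) : ℝ) = 2 * (P k : ℝ) + (P (k - 1) : ℝ) := by
      have := hP (k - 1)
      rw [show k - 1 + 2 = k + 1 by ring, show k - 1 + 1 = k by ring] at this
      exact_mod_cast this
    have hE : (-1 : ℝ) ^ (k + 1) = (-1 : ℝ) ^ k * (-1) := by
      rw [← zpow_add_one₀ hne]
    linear_combination -ih2 + (P k : ℝ) * hS - (P (k + 1) : ℝ) * hT - hE

end Pell

theorem bicomplexPell_catalan (P : ℤ → ℤ)
    (hP : ∀ n : ℤ, P (n + 2) = 2 * P (n + 1) + P n) (hP0 : P 0 = 0) (hP1 : P 1 = 1)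
    (n r : ℤ) :
    BP P n ^ 2 - BP P (n + r) * BP P (n - r) =
      (12 * (-1 : ℝ) ^ (n - r) * (P r : ℝ) ^ 2) • (bj + bij) := by
  have padd := pell_add P hP hP0 hP1
  have hcas := pell_cassini P hP hP0 hP1
  -- abbreviations: c = P (n-r), d = P (n-r+1), p = P r, q = P (r+1)
  have hrm : (P (r - 1) : ℝ) = (P (r + 1) : ℝ) - 2 * (P r : ℝ) := by
    have := hP (r - 1)
    rw [show r - 1 + 2 = r + 1 by ring, show r - 1 + 1 = r by ring] at this
    push_cast [this]; ring
  have h0R : (P n : ℝ) = (P r : ℝ) * (P (n - r + 1) : ℝ) +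
      ((P (r + 1) : ℝ) - 2 * (P r : ℝ)) * (P (n - r) : ℝ) := by
    have := padd (n - r) r
    rw [show n - r + r = n by ring] at this
    rw [← hrm]; exact_mod_cast this
  have h1R : (P (n + 1) : ℝ) = (P (r + 1) : ℝ) * (P (n - r + 1) : ℝ) +
      (P r : ℝ) * (P (n - r) : ℝ) := by
    have := padd (n - r) (r + 1)
    rw [show n - r + (r + 1) = n + 1 by ring, show r + 1 - 1 = r by ring] at this
    exact_mod_cast this
  have hA2 : (P (n + 2) : ℝ) = 2 * (P (n + 1) : ℝ) + (P n : ℝ) := by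
    exact_mod_cast hP n
  have hA3 : (P (n + 3) : ℝ) = 2 * (P (n + 2) : ℝ) + (P (n + 1) : ℝ) := by
    have := hP (n + 1)
    rw [show n + 1 + 2 = n + 3 by ring, show n + 1 + 1 = n + 2 by ring] at this
    exact_mod_cast this
  have hB0 : (P (n + r) : ℝ) = (P r : ℝ) * (P (n + 1) : ℝ) +
      ((P (r + 1) : ℝ) - 2 * (P r : ℝ)) * (P n : ℝ) := by
    have := padd n r
    rw [← hrm]; exact_mod_cast this
  have hB1 : (P (n + r + 1) : ℝ) = (P (r + 1) : ℝ) * (P (n + 1) : ℝ) +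
      (P r : ℝ) * (P n : ℝ) := by
    have := padd n (r + 1)
    rw [show n + (r + 1) = n + r + 1 by ring, show r + 1 - 1 = r by ring] at this
    exact_mod_cast this
  have hB2 : (P (n + r + 2) : ℝ) = 2 * (P (n + r + 1) : ℝ) + (P (n + r) : ℝ) := by
    exact_mod_cast hP (n + r)
  have hB3 : (P (n + r + 3) : ℝ) = 2 * (P (n + r + 2) : ℝ) + (P (n + r + 1) : ℝ) := by
    have := hP (n + r + 1)
    rw [show n + r + 1 + 2 = n + r + 3 by ring, show n + r + 1 + 1 = n + r + 2 by ring]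
      at this
    exact_mod_cast this
  have hC2 : (P (n - r + 2) : ℝ) = 2 * (P (n - r + 1) : ℝ) + (P (n - r) : ℝ) := by
    exact_mod_cast hP (n - r)
  have hC3 : (P (n - r + 3) : ℝ) = 2 * (P (n - r + 2) : ℝ) + (P (n - r + 1) : ℝ) := by
    have := hP (n - r + 1)
    rw [show n - r + 1 + 2 = n - r + 3 by ring, show n - r + 1 + 1 = n - r + 2 by ring]
      at this
    exact_mod_cast this
  have hm : (P (n - r - 1) : ℝ) = (P (n - r + 1) : ℝ) - 2 * (P (n - r) : ℝ) := by
    have := hP (n - r - 1)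
    rw [show n - r - 1 + 2 = n - r + 1 by ring, show n - r - 1 + 1 = n - r by ring] at this
    push_cast [this]; ring
  have hE : (-1 : ℝ) ^ (n - r) = (P (n - r + 1) : ℝ) ^ 2 -
      2 * (P (n - r) : ℝ) * (P (n - r + 1) : ℝ) - (P (n - r) : ℝ) ^ 2 := by
    rw [← hcas (n - r), hm]; ring
  simp only [BP, pow_two]
  rw [mul_expand, mul_expand, hE, hA3, hA2, hB3, hB2, hB1, hB0, hC3, hC2, h1R, h0R]
  match_scalars <;> ring
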